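/- Let λ be a regular uncountable cardinal and p, q ∈ Q⁰_λ. The following are equivalent: (a) p ≤⁰ q (i.e., fil(p) ⊆ fil(q)); (b) there is ε < λ such that for every α ∈ C^q \ ε and every A ∈ d^q_α there is β ∈ C^p with A ∩ Z^p_β ∈ d^p_β; (c) there is ε < λ such that for every α ∈ C^q \ ε, letting β₀ = sup(C^p ∩ (α+1)) and β₁ = min(C^p \ min(C^q \ (α+1))), there is an ultrafilter e on [β₀, β₁) ∩ C^p with d^q_α = {A ∩ Z^q_α : A ∈ ⊕^e{d^p_β : β ∈ [β₀, β₁) ∩ C^p}}. -/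

import Mathlib

open Set Ordinal Cardinal

noncomputable section

namespace Sh830

/-- `D` is a (proper) ultrafilter on the set `Z` of ordinals. -/
def IsUltraOn (Z : Set Ordinal) (D : Set (Set Ordinal)) : Prop :=
  (∀ A ∈ D, A ⊆ Z) ∧ Z ∈ D ∧ ∅ ∉ D ∧
  (∀ A B : Set Ordinal, A ∈ D → A ⊆ B → B ⊆ Z → B ∈ D) ∧
  (∀ A B : Set Ordinal, A ∈ D → B ∈ D → A ∩ B ∈ D) ∧
  (∀ A : Set Ordinal, A ⊆ Z → A ∈ D ∨ Z \ A ∈ D)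

/-- `D` is an ultrafilter on `λ`, where `λ` is identified with the set of ordinals `< λ`. -/
def IsUltrafilterOn (l : Ordinal) (D : Set (Set Ordinal)) : Prop :=
  IsUltraOn (Iio l) D

/-- `D` is uniform: every member of `D` has cardinality `λ`. -/
def IsUniformOn (l : Ordinal) (D : Set (Set Ordinal)) : Prop :=
  ∀ A ∈ D, #A = #(Iio l)

/-- `C` is a club (closed and unbounded) subset of `λ`. -/
def IsClubIn (C : Set Ordinal) (l : Ordinal) : Prop :=
  C ⊆ Iio l ∧
  (∀ δ, δ < l → δ ≠ 0 → sSup (C ∩ Iio δ) = δ → δ ∈ C) ∧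
  (∀ α, α < l → ∃ β ∈ C, α < β)

/-- The quotient `D/f = {A ⊆ λ : f⁻¹(A) ∈ D}`. -/
def quotUF (l : Ordinal) (D : Set (Set Ordinal)) (f : Ordinal → Ordinal) :
    Set (Set Ordinal) :=
  {A | A ⊆ Iio l ∧ Iio l ∩ f ⁻¹' A ∈ D}

/-- The family `F_λ` of all non-decreasing functions `λ → λ` with unbounded range. -/
def Flam (l : Ordinal) : Set (Ordinal → Ordinal) :=
  {f | (∀ α, α < l → f α < l) ∧ (∀ α β, α ≤ β → β < l → f α ≤ f β) ∧
    (∀ γ, γ < l → ∃ α, α < l ∧ γ ≤ f α)}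

/-- `D` is weakly reasonable: for every `f ∈ F_λ` there is a club `C` of `λ` with
`∪ {[δ, δ + f δ) : δ ∈ C} ∉ D`. -/
def WeaklyReasonable (l : Ordinal) (D : Set (Set Ordinal)) : Prop :=
  ∀ f ∈ Flam l, ∃ C, IsClubIn C l ∧ (⋃ δ ∈ C, Ico δ (δ + f δ)) ∉ D

/-- The order type of a set of ordinals: the (unique) ordinal order-isomorphic to it. -/
def setOtp (S : Set Ordinal) : Ordinal :=
  sInf {o : Ordinal | Nonempty (Iio o ≃o S)}

/-- `min(β/E)`: the least element of the `E`-equivalence class of `β`. -/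
def minClass (E : Ordinal → Ordinal → Prop) (β : Ordinal) : Ordinal :=
  sInf {γ | E γ β}

/-- The function `f_E` associated with an equivalence relation `E`:
`f_E α = otp {β < α : β = min(β/E) < min(α/E)}`. -/
def fEquiv (E : Ordinal → Ordinal → Prop) (α : Ordinal) : Ordinal :=
  setOtp {β | β < α ∧ β = minClass E β ∧ minClass E β < minClass E α}

/-- The equivalence relation `E_C` associated with a club `C`:
`α E_C β` iff `(∀ γ ∈ C)(α < γ ↔ β < γ)`. -/
def clubRel (C : Set Ordinal) (α β : Ordinal) : Prop :=
  ∀ γ ∈ C, (α < γ ↔ β < γ)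

/-- The quotient `D/C = D/E_C = D/f_{E_C}`. -/
def quotClub (l : Ordinal) (D : Set (Set Ordinal)) (C : Set Ordinal) :
    Set (Set Ordinal) :=
  quotUF l D (fEquiv (clubRel C))

/-- A strategy for Odd in the game `⅁_D`: given `i < λ`, Even's moves `β_j = α_{2j}`
for `j ≤ i`, and Odd's previous moves `γ_j = α_{2j+1}` for `j < i`, it produces
Odd's move `γ_i = α_{2i+1}`. -/
def OddStr : Type 1 :=
  (i : Ordinal) → ((j : Ordinal) → j ≤ i → Ordinal) → ((j : Ordinal) → j < i → Ordinal) → Ordinal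

/-- A legal position of the game just before Odd's `i`-th move. -/
def IsPosition (l i : Ordinal) (β γ : Ordinal → Ordinal) : Prop :=
  i < l ∧ (∀ j, j ≤ i → β j < l) ∧ (∀ j, j < i → β j < γ j ∧ γ j < l) ∧
  (∀ j, j < i → γ j < β (j + 1)) ∧
  (∀ j, j ≤ i → Order.IsSuccLimit j → β j = sSup (γ '' Iio j))

/-- A complete legal play of the game of length `λ`: `β i` is `α_{2i}`
(Even's move) and `γ i` is `α_{2i+1}` (Odd's move). -/
def IsPlay (l : Ordinal) (β γ : Ordinal → Ordinal) : Prop :=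
  (∀ i, i < l → β i < l ∧ γ i < l) ∧ (∀ i, i < l → β i < γ i) ∧
  (∀ i, i + 1 < l → γ i < β (i + 1)) ∧
  (∀ i, i < l → Order.IsSuccLimit i → β i = sSup (γ '' Iio i))

/-- `st` is a legal strategy for Odd: at every legal position it produces a legal move,
i.e. an ordinal `α_{2i+1}` with `α_{2i} < α_{2i+1} < λ`. -/
def IsOddStrategy (l : Ordinal) (st : OddStr) : Prop :=
  ∀ i β γ, IsPosition l i β γ →
    β i < st i (fun j _ => β j) (fun j _ => γ j) ∧
    st i (fun j _ => β j) (fun j _ => γ j) < l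

/-- The play `(β, γ)` follows the strategy `st` of Odd. -/
def FollowsOdd (l : Ordinal) (st : OddStr) (β γ : Ordinal → Ordinal) : Prop :=
  ∀ i, i < l → γ i = st i (fun j _ => β j) (fun j _ => γ j)

/-- `st` is winning for Odd in `⅁_D`: in every play following it, Even loses, i.e.
`∪ {[α_{2i+1}, α_{2i+2}) : i < λ} ∉ D`. -/
def OddWinsWith (l : Ordinal) (D : Set (Set Ordinal)) (st : OddStr) : Prop :=
  ∀ β γ, IsPlay l β γ → FollowsOdd l st β γ →
    (⋃ i ∈ Iio l, Ico (γ i) (β (i + 1))) ∉ D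

/-- The next element of `C` above `δ`, i.e. `min (C \ (δ+1))`. -/
def nxt (C : Set Ordinal) (δ : Ordinal) : Ordinal := sInf (C ∩ Ioi δ)

/-- A condition of the forcing notion `Q¹_λ`; here `Z^p_δ = [δ, nxt C δ)` and
`d δ` is the ultrafilter `d^p_δ` on `Z^p_δ`. -/
structure Q1 (l : Ordinal) where
  γ : Ordinal
  C : Set Ordinal
  d : Ordinal → Set (Set Ordinal)
  γ_lt : γ < l
  club : IsClubIn C l
  lim : ∀ δ ∈ C, Order.IsSuccLimit δ
  ultra : ∀ δ ∈ C, IsUltraOn (Ico δ (nxt C δ)) (d δ)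

/-- The order of `Q¹_λ`. -/
def Q1le (l : Ordinal) (p q : Q1 l) : Prop :=
  p.γ ≤ q.γ ∧ p.C ∩ Iio p.γ ⊆ q.C ∧ q.C ⊆ p.C ∧
  ∀ δ ∈ q.C, ∀ A ∈ q.d δ,
    ∃ ζ ∈ p.C ∩ Ico δ (nxt q.C δ), A ∩ Ico ζ (nxt p.C ζ) ∈ p.d ζ

/-- A condition of the forcing notion `Q⁰_λ`; here `Z^p_δ = [δ, nxt C δ)` and
`d δ` is the ultrafilter `d^p_δ` on `Z^p_δ`. -/
structure Q0 (l : Ordinal) where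
  C : Set Ordinal
  d : Ordinal → Set (Set Ordinal)
  club : IsClubIn C l
  lim : ∀ δ ∈ C, Order.IsSuccLimit δ
  ultra : ∀ δ ∈ C, IsUltraOn (Ico δ (nxt C δ)) (d δ)

/-- The order relation of `Q⁰_λ`, on the underlying data. -/
def Q0leAux (Cp : Set Ordinal) (dp : Ordinal → Set (Set Ordinal))
    (Cq : Set Ordinal) (dq : Ordinal → Set (Set Ordinal)) : Prop :=
  Cq ⊆ Cp ∧ ∀ δ ∈ Cq, ∀ A ∈ dq δ,
    ∃ ζ ∈ Cp ∩ Ico δ (nxt Cq δ), A ∩ Ico ζ (nxt Cp ζ) ∈ dp ζ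

/-- The order `≤_{Q⁰_λ}`. -/
def Q0le (l : Ordinal) (p q : Q0 l) : Prop := Q0leAux p.C p.d q.C q.d

/-- The relation `≤*_{Q⁰_λ}`: for some `α < λ` the restrictions beyond `α` are
`≤_{Q⁰_λ}`-related. -/
def Q0leStar (l : Ordinal) (p q : Q0 l) : Prop :=
  ∃ α, α < l ∧ Q0leAux (p.C \ Iio α) p.d (q.C \ Iio α) q.d

/-- `fil(p) = {A ⊆ λ : (∃ ε < λ)(∀ δ ∈ C^p \ ε)(A ∩ Z^p_δ ∈ d^p_δ)}`. -/
def fil (l : Ordinal) (p : Q0 l) : Set (Set Ordinal) :=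
  {A | A ⊆ Iio l ∧ ∃ ε, ε < l ∧ ∀ δ ∈ p.C, ε ≤ δ → A ∩ Ico δ (nxt p.C δ) ∈ p.d δ}

/-- `fil(G*) = ∪ {fil(p) : p ∈ G*}`. -/
def filG (l : Ordinal) (G : Set (Q0 l)) : Set (Set Ordinal) := ⋃ p ∈ G, fil l p

/-- The relation `≤⁰`: `p ≤⁰ q` iff `fil(p) ⊆ fil(q)`. -/
def le0 (l : Ordinal) (p q : Q0 l) : Prop := fil l p ⊆ fil l q

/-- `G` is `(<c)`-directed with respect to `le`: `G` is nonempty and every subset of `G`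
of cardinality `< c` has an upper bound in `G`. -/
def DirLtOn (l : Ordinal) (c : Cardinal.{1}) (G : Set (Q0 l))
    (le : Q0 l → Q0 l → Prop) : Prop :=
  G.Nonempty ∧ ∀ S : Set (Q0 l), S ⊆ G → #S < c → ∃ r ∈ G, ∀ p ∈ S, le p r

/-- The sum `⊕^e {d_x : x ∈ X}` of ultrafilters `d x` on `Z x` along an ultrafilter `e`
on `X`. -/
def ufSum (X : Set Ordinal) (e : Set (Set Ordinal)) (Z : Ordinal → Set Ordinal)
    (d : Ordinal → Set (Set Ordinal)) : Set (Set Ordinal) :=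
  {A | A ⊆ (⋃ x ∈ X, Z x) ∧ {x | x ∈ X ∧ Z x ∩ A ∈ d x} ∈ e}

/-- The function `f_p` associated with `p ∈ Q⁰_λ`: `f_p α` is the member of `C^p` with
`otp (C^p ∩ f_p α) = ω·α + ω`. -/
def fP (l : Ordinal) (p : Q0 l) (α : Ordinal) : Ordinal :=
  sInf {β | β ∈ p.C ∧ setOtp (p.C ∩ Iio β) = Ordinal.omega0 * α + Ordinal.omega0}

/-- The space `^λλ` (functions below `l` matter). -/
def funSp (l : Ordinal) : Set (Ordinal → Ordinal) := {f | ∀ α, α < l → f α < l}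

/-- `F` is a dominating family in `^λλ`. -/
def IsDominating (l : Ordinal) (F : Set (Ordinal → Ordinal)) : Prop :=
  ∀ g ∈ funSp l, ∃ f ∈ F, ∃ α, α < l ∧ ∀ β, α < β → β < l → g β < f β

/-- The dominating number `𝔡_λ`. -/
def dLam (l : Ordinal) : Cardinal.{1} :=
  sInf {c : Cardinal | ∃ F : Set (Ordinal → Ordinal),
    F ⊆ funSp l ∧ IsDominating l F ∧ #F = c}

/-- `S` is non-stationary in `λ`. -/
def NonStatIn (S : Set Ordinal) (l : Ordinal) : Prop :=
  ∃ C, IsClubIn C l ∧ S ∩ C = ∅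

/-- `F` is a club-dominating family in `^λλ`. -/
def IsClubDominating (l : Ordinal) (F : Set (Ordinal → Ordinal)) : Prop :=
  ∀ g ∈ funSp l, ∃ f ∈ F, NonStatIn {β | β < l ∧ f β ≤ g β} l

/-- The club-dominating number `𝔡_{cl(λ)}`. -/
def dClubLam (l : Ordinal) : Cardinal.{1} :=
  sInf {c : Cardinal | ∃ F : Set (Ordinal → Ordinal),
    F ⊆ funSp l ∧ IsClubDominating l F ∧ #F = c}

/-- `A` is a nowhere dense subset of the space `^λλ` (with basic open sets determined
by initial segments). -/
def IsNwd (l : Ordinal) (A : Set (Ordinal → Ordinal)) : Prop :=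
  A ⊆ funSp l ∧
  ∀ s ∈ funSp l, ∀ α, α < l → ∃ t ∈ funSp l, ∃ α', α ≤ α' ∧ α' < l ∧
    (∀ β, β < α → t β = s β) ∧ ∀ f ∈ funSp l, (∀ β, β < α' → f β = t β) → f ∉ A

/-- `A` belongs to the ideal `M^λ_{λ,λ}`, the `(<λ)`-complete ideal generated by the
nowhere dense subsets of `^λλ`. -/
def InMIdeal (l : Ordinal) (A : Set (Ordinal → Ordinal)) : Prop :=
  A ⊆ funSp l ∧ ∃ θ, θ < l ∧ ∃ B : Ordinal → Set (Ordinal → Ordinal),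
    (∀ i, i < θ → IsNwd l (B i)) ∧ A ⊆ ⋃ i ∈ Iio θ, B i

/-- The covering number `cov(M^λ_{λ,λ})`. -/
def covM (l : Ordinal) : Cardinal.{1} :=
  sInf {c : Cardinal | ∃ S : Set (Set (Ordinal → Ordinal)),
    (∀ A ∈ S, InMIdeal l A) ∧ funSp l ⊆ ⋃₀ S ∧ #S = c}


section Helpers
variable {l : Ordinal} {C : Set Ordinal}


lemma nxt_spec (hC : IsClubIn C l) {δ : Ordinal} (hδ : δ < l) :
    nxt C δ ∈ C ∧ δ < nxt C δ := by
  obtain ⟨β, hβC, hβ⟩ := hC.2.2 δ hδ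
  exact csInf_mem (⟨β, hβC, hβ⟩ : (C ∩ Ioi δ).Nonempty)

lemma nxt_lt (hC : IsClubIn C l) {δ : Ordinal} (hδ : δ < l) : nxt C δ < l :=
  hC.1 (nxt_spec hC hδ).1

lemma nxt_le (hC : IsClubIn C l) {δ γ : Ordinal} (hγ : γ ∈ C) (h : δ < γ) :
    nxt C δ ≤ γ := csInf_le' ⟨hγ, h⟩

lemma Z_disj (hC : IsClubIn C l) {β β' ξ : Ordinal} (hβ : β ∈ C) (hβ' : β' ∈ C)
    (h1 : ξ ∈ Ico β (nxt C β)) (h2 : ξ ∈ Ico β' (nxt C β')) : β = β' := by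
  rcases lt_trichotomy β β' with h | h | h
  · exact absurd ((nxt_le hC hβ' h).trans h2.1) (not_le.2 h1.2)
  · exact h
  · exact absurd ((nxt_le hC hβ h).trans h1.1) (not_le.2 h2.2)

lemma sSup_Iic_mem (hC : IsClubIn C l) {α : Ordinal} (hα : α < l)
    (hne : (C ∩ Iic α).Nonempty) :
    sSup (C ∩ Iic α) ∈ C ∧ sSup (C ∩ Iic α) ≤ α := by
  have hbdd : BddAbove (C ∩ Iic α) := ⟨α, fun x hx => hx.2⟩
  have hle : sSup (C ∩ Iic α) ≤ α := csSup_le hne fun x hx => hx.2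
  by_cases hmem : sSup (C ∩ Iic α) ∈ C ∩ Iic α
  · exact ⟨hmem.1, hle⟩
  · set s := sSup (C ∩ Iic α) with hs
    have hlt : ∀ γ ∈ C ∩ Iic α, γ < s := by
      intro γ hγ
      rcases lt_or_eq_of_le (le_csSup hbdd hγ) with h | h
      · exact h
      · exact absurd (by rwa [h] at hγ) hmem
    obtain ⟨γ₀, hγ₀⟩ := hne
    have hs0 : s ≠ 0 := by
      intro h0
      exact absurd (h0 ▸ hlt γ₀ hγ₀) (by simp)
    have heq : sSup (C ∩ Iio s) = s := by
      apply le_antisymm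
      · exact csSup_le ⟨γ₀, hγ₀.1, hlt γ₀ hγ₀⟩ fun x hx => le_of_lt hx.2
      · by_contra hc
        push_neg at hc
        have hne' : (C ∩ Iic α).Nonempty := ⟨γ₀, hγ₀⟩
        rw [hs] at hc
        obtain ⟨γ, hγ, hγ'⟩ := exists_lt_of_lt_csSup hne' hc
        have hb : BddAbove (C ∩ Iio s) := ⟨s, fun x hx => le_of_lt hx.2⟩
        have hγm : γ ∈ C ∩ Iio s := ⟨hγ.1, hlt γ hγ⟩
        exact absurd (le_csSup hb hγm) (not_le.2 hγ')
    exact ⟨hC.2.1 s (lt_of_le_of_lt hle hα) hs0 heq, hle⟩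

lemma sInf_Ici_mem (hC : IsClubIn C l) {x : Ordinal} (hx : x < l) :
    sInf (C ∩ Ici x) ∈ C ∧ x ≤ sInf (C ∩ Ici x) := by
  obtain ⟨β, hβC, hβ⟩ := hC.2.2 x hx
  exact csInf_mem (⟨β, hβC, le_of_lt hβ⟩ : (C ∩ Ici x).Nonempty)

lemma cover (hC : IsClubIn C l) {γ₀ ξ : Ordinal} (hγ₀ : γ₀ ∈ C) (hγξ : γ₀ ≤ ξ)
    (hξ : ξ < l) :
    sSup (C ∩ Iic ξ) ∈ C ∧ sSup (C ∩ Iic ξ) ≤ ξ ∧ ξ < nxt C (sSup (C ∩ Iic ξ)) := by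
  obtain ⟨hm, hle⟩ := sSup_Iic_mem hC hξ ⟨γ₀, hγ₀, hγξ⟩
  refine ⟨hm, hle, ?_⟩
  by_contra hc
  push_neg at hc
  have h1 := nxt_spec hC (lt_of_le_of_lt hle hξ)
  have h2 : nxt C (sSup (C ∩ Iic ξ)) ≤ sSup (C ∩ Iic ξ) :=
    le_csSup ⟨ξ, fun x hx => hx.2⟩ ⟨h1.1, hc⟩
  exact absurd h2 (not_le.2 h1.2)


end Helpers

lemma a_of_b {l : Ordinal} (p q : Q0 l)
    (hb : ∃ ε, ε < l ∧ ∀ α ∈ q.C, ε ≤ α → ∀ A ∈ q.d α,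
      ∃ β ∈ p.C, A ∩ Ico β (nxt p.C β) ∈ p.d β) :
    le0 l p q := by
  obtain ⟨εb, hεb, hbp⟩ := hb
  rintro A ⟨hAsub, εz, hεz, hA0⟩
  obtain ⟨γ₂, hγ₂C, hγ₂⟩ := p.club.2.2 εz hεz
  have hγ₂l : γ₂ < l := p.club.1 hγ₂C
  refine ⟨hAsub, max εb (nxt p.C γ₂), max_lt hεb (nxt_lt p.club hγ₂l), ?_⟩
  intro α hαC hαε
  by_contra hnot
  have hαl : α < l := q.club.1 hαC
  have hqu := q.ultra α hαC
  rcases hqu.2.2.2.2.2 (A ∩ Ico α (nxt q.C α)) inter_subset_right with h | h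
  · exact hnot h
  have hBeq : Ico α (nxt q.C α) \ (A ∩ Ico α (nxt q.C α)) = Ico α (nxt q.C α) \ A := by
    ext ξ; simp only [mem_diff, mem_inter_iff]; tauto
  rw [hBeq] at h
  obtain ⟨β, hβC, hβd⟩ := hbp α hαC (le_trans (le_max_left _ _) hαε) _ h
  have hpu := p.ultra β hβC
  have hne : ((Ico α (nxt q.C α) \ A) ∩ Ico β (nxt p.C β)).Nonempty := by
    rw [nonempty_iff_ne_empty]; intro h0; rw [h0] at hβd; exact hpu.2.2.1 hβd
  obtain ⟨ξ, ⟨⟨hξα, hξq⟩, hξA⟩, hξβ, hξn⟩ := hne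
  have hβεz : εz ≤ β := by
    by_contra hβ; push_neg at hβ
    have h1 : nxt p.C β ≤ γ₂ := nxt_le p.club hγ₂C (hβ.trans hγ₂)
    have h2 : γ₂ < nxt p.C γ₂ := (nxt_spec p.club hγ₂l).2
    have h3 : nxt p.C γ₂ ≤ α := le_trans (le_max_right εb _) hαε
    exact absurd (hξn.trans_le (h1.trans (le_of_lt (h2.trans_le (h3.trans hξα))))) (lt_irrefl ξ)
  have hAβ := hA0 β hβC hβεz
  have hint := hpu.2.2.2.2.1 _ _ hβd hAβ
  have hemp : (Ico α (nxt q.C α) \ A) ∩ Ico β (nxt p.C β) ∩ (A ∩ Ico β (nxt p.C β)) = ∅ := by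
    ext x; simp only [mem_inter_iff, mem_diff, mem_empty_iff_false, iff_false]; tauto
  rw [hemp] at hint
  exact hpu.2.2.1 hint
lemma c_of_b {l : Ordinal} (hl : Order.IsSuccLimit l) (p q : Q0 l)
    (hb : ∃ ε, ε < l ∧ ∀ α ∈ q.C, ε ≤ α → ∀ A ∈ q.d α,
      ∃ β ∈ p.C, A ∩ Ico β (nxt p.C β) ∈ p.d β) :
    ∃ ε, ε < l ∧ ∀ α ∈ q.C, ε ≤ α →
      ∃ e : Set (Set Ordinal),
        IsUltraOn (Ico (sSup (p.C ∩ Iic α)) (sInf (p.C ∩ Ici (nxt q.C α))) ∩ p.C) e ∧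
        q.d α = {B | ∃ A ∈ ufSum
            (Ico (sSup (p.C ∩ Iic α)) (sInf (p.C ∩ Ici (nxt q.C α))) ∩ p.C) e
            (fun x => Ico x (nxt p.C x)) p.d,
          B = A ∩ Ico α (nxt q.C α)} := by
  obtain ⟨εb, hεb, hbp⟩ := hb
  obtain ⟨γ₀, hγ₀C, -⟩ := p.club.2.2 0 hl.pos
  have hγ₀l : γ₀ < l := p.club.1 hγ₀C
  refine ⟨max εb γ₀, max_lt hεb hγ₀l, ?_⟩
  intro α hαq hαε
  have hαl : α < l := q.club.1 hαq
  have hγ₀α : γ₀ ≤ α := le_trans (le_max_right _ _) hαε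
  have hεbα : εb ≤ α := le_trans (le_max_left _ _) hαε
  set β₀ := sSup (p.C ∩ Iic α) with hβ₀def
  set β₁ := sInf (p.C ∩ Ici (nxt q.C α)) with hβ₁def
  set X := Ico β₀ β₁ ∩ p.C with hXdef
  set Zq := Ico α (nxt q.C α) with hZqdef
  have hqu := q.ultra α hαq
  have hcov := cover p.club hγ₀C hγ₀α hαl
  have hnq : nxt q.C α < l := nxt_lt q.club hαl
  have hβ₁m := sInf_Ici_mem p.club hnq
  have hXsub : X ⊆ p.C := inter_subset_right
  have hF3 : ∀ β ∈ p.C, (Ico β (nxt p.C β) ∩ Zq).Nonempty → β ∈ X := by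
    rintro β hβC ⟨ξ, ⟨hξβ, hξn⟩, hξα, hξq⟩
    refine ⟨⟨?_, ?_⟩, hβC⟩
    · by_contra hlt; push_neg at hlt
      have h1 := nxt_le p.club hcov.1 hlt
      exact absurd (hξn.trans_le (h1.trans (hcov.2.1.trans hξα))) (lt_irrefl ξ)
    · exact lt_of_lt_of_le (lt_of_le_of_lt hξβ hξq) hβ₁m.2
  have hF4 : ∀ ξ ∈ Zq, ∃ β ∈ X, ξ ∈ Ico β (nxt p.C β) := by
    rintro ξ ⟨hξα, hξq⟩
    have hξl : ξ < l := hξq.trans hnq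
    have hc := cover p.club hγ₀C (hγ₀α.trans hξα) hξl
    exact ⟨sSup (p.C ∩ Iic ξ), hF3 _ hc.1 ⟨ξ, ⟨hc.2.1, hc.2.2⟩, hξα, hξq⟩, hc.2.1, hc.2.2⟩
  set e : Set (Set Ordinal) := {Y | Y ⊆ X ∧ ∃ A ∈ q.d α,
    {β | β ∈ X ∧ Ico β (nxt p.C β) ∩ A ∈ p.d β} ⊆ Y} with hedef
  have hsupp : ∀ A ∈ q.d α, ∃ β, β ∈ X ∧ Ico β (nxt p.C β) ∩ A ∈ p.d β := by
    intro A hA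
    obtain ⟨β, hβC, hβd⟩ := hbp α hαq hεbα A hA
    have hpu := p.ultra β hβC
    rw [inter_comm] at hβd
    have hne : (Ico β (nxt p.C β) ∩ A).Nonempty := by
      rw [nonempty_iff_ne_empty]; intro h0; rw [h0] at hβd; exact hpu.2.2.1 hβd
    have hAZq : A ⊆ Zq := hqu.1 A hA
    have hne2 : (Ico β (nxt p.C β) ∩ Zq).Nonempty :=
      hne.mono (inter_subset_inter_right _ hAZq)
    exact ⟨β, hF3 β hβC hne2, hβd⟩
  have hup : ∀ β ∈ p.C, ∀ A A' : Set Ordinal, Ico β (nxt p.C β) ∩ A ∈ p.d β → A ⊆ A' →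
      Ico β (nxt p.C β) ∩ A' ∈ p.d β := fun β hβ A A' h hsub =>
    (p.ultra β hβ).2.2.2.1 _ _ h (inter_subset_inter_right _ hsub) inter_subset_left
  have hdisj : ∀ Y : Set Ordinal, Y ⊆ X → ∀ β ∈ X,
      Ico β (nxt p.C β) ∩ (Zq ∩ ⋃ β' ∈ Y, Ico β' (nxt p.C β')) ∈ p.d β → β ∈ Y := by
    intro Y hY β hβ hmem
    have hpu := p.ultra β (hXsub hβ)
    have hne : (Ico β (nxt p.C β) ∩ (Zq ∩ ⋃ β' ∈ Y, Ico β' (nxt p.C β'))).Nonempty := by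
      rw [nonempty_iff_ne_empty]; intro h0; rw [h0] at hmem; exact hpu.2.2.1 hmem
    obtain ⟨ξ, hξZ, -, hξU⟩ := hne
    simp only [mem_iUnion, exists_prop] at hξU
    obtain ⟨β', hβ', hξβ'⟩ := hξU
    have heqβ := Z_disj p.club (hXsub hβ) (hXsub (hY hβ')) hξZ hξβ'
    rwa [heqβ]
  have heu : IsUltraOn X e := by
    refine ⟨fun Y hY => hY.1, ⟨Subset.rfl, Zq, hqu.2.1, fun β hβ => hβ.1⟩, ?_, ?_, ?_, ?_⟩
    · rintro ⟨hsub, A, hA, hsuppA⟩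
      obtain ⟨β, hβ⟩ := hsupp A hA
      exact (hsuppA hβ : β ∈ (∅ : Set Ordinal))
    · rintro A B ⟨hAX, A₀, hA₀, hs⟩ hAB hBX
      exact ⟨hBX, A₀, hA₀, hs.trans hAB⟩
    · rintro Y₁ Y₂ ⟨h1X, A₁, hA₁, hs₁⟩ ⟨h2X, A₂, hA₂, hs₂⟩
      refine ⟨fun x hx => h1X hx.1, A₁ ∩ A₂, hqu.2.2.2.2.1 _ _ hA₁ hA₂, ?_⟩
      rintro β ⟨hβX, hβd⟩
      exact ⟨hs₁ ⟨hβX, hup β (hXsub hβX) _ _ hβd inter_subset_left⟩,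
        hs₂ ⟨hβX, hup β (hXsub hβX) _ _ hβd inter_subset_right⟩⟩
    · intro Y hYX
      rcases hqu.2.2.2.2.2 (Zq ∩ ⋃ β ∈ Y, Ico β (nxt p.C β)) inter_subset_left with h | h
      · exact Or.inl ⟨hYX, _, h, fun β hβ => hdisj Y hYX β hβ.1 hβ.2⟩
      · refine Or.inr ⟨fun x hx => hx.1, Zq ∩ ⋃ β ∈ X \ Y, Ico β (nxt p.C β), ?_,
          fun β hβ => hdisj (X \ Y) diff_subset β hβ.1 hβ.2⟩
        refine hqu.2.2.2.1 _ _ h ?_ inter_subset_left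
        rintro ξ ⟨hξZ, hξn⟩
        obtain ⟨β, hβX, hξβ⟩ := hF4 ξ hξZ
        have hβnY : β ∉ Y := fun hin => hξn ⟨hξZ, mem_biUnion hin hξβ⟩
        exact ⟨hξZ, mem_biUnion ⟨hβX, hβnY⟩ hξβ⟩
  refine ⟨e, heu, Subset.antisymm ?_ ?_⟩
  · intro A' hA'
    have hA'Zq : A' ⊆ Zq := hqu.1 A' hA'
    refine ⟨A' ∪ ((⋃ β ∈ X, Ico β (nxt p.C β)) \ Zq), ⟨?_, ?_⟩, ?_⟩
    · apply union_subset
      · intro ξ hξ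
        obtain ⟨β, hβX, hξβ⟩ := hF4 ξ (hA'Zq hξ)
        exact mem_biUnion hβX hξβ
      · exact diff_subset
    · refine ⟨fun x hx => hx.1, A', hA', ?_⟩
      rintro β ⟨hβX, hβd⟩
      exact ⟨hβX, hup β (hXsub hβX) _ _ hβd subset_union_left⟩
    · ext ξ
      constructor
      · intro h; exact ⟨Or.inl h, hA'Zq h⟩
      · rintro ⟨h1 | h1, h2⟩
        · exact h1
        · exact absurd h2 h1.2
  · rintro B ⟨A, ⟨hAsub, hSA⟩, rfl⟩
    obtain ⟨hSX, B₀, hB₀, hsB₀⟩ := hSA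
    by_contra hno
    rcases hqu.2.2.2.2.2 (A ∩ Zq) inter_subset_right with h | h
    · exact hno h
    have hZqA : Zq \ (A ∩ Zq) = Zq \ A := by
      ext ξ; simp only [mem_diff, mem_inter_iff]; tauto
    rw [hZqA] at h
    have hB₁ : B₀ ∩ (Zq \ A) ∈ q.d α := hqu.2.2.2.2.1 _ _ hB₀ h
    obtain ⟨β, hβC, hβd⟩ := hbp α hαq hεbα _ hB₁
    have hpu := p.ultra β hβC
    have hne : (B₀ ∩ (Zq \ A) ∩ Ico β (nxt p.C β)).Nonempty := by
      rw [nonempty_iff_ne_empty]; intro h0; rw [h0] at hβd; exact hpu.2.2.1 hβd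
    have hβX : β ∈ X := hF3 β hβC (hne.mono (fun ξ hξ => ⟨hξ.2, hξ.1.2.1⟩))
    have hβB₀ : Ico β (nxt p.C β) ∩ B₀ ∈ p.d β :=
      hpu.2.2.2.1 _ _ hβd (fun ξ hξ => ⟨hξ.2, hξ.1.1⟩) inter_subset_left
    have hβA := hsB₀ ⟨hβX, hβB₀⟩
    have hint := hpu.2.2.2.2.1 _ _ hβd hβA.2
    have hemp : B₀ ∩ (Zq \ A) ∩ Ico β (nxt p.C β) ∩ (Ico β (nxt p.C β) ∩ A) = ∅ := by
      ext ξ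
      simp only [mem_inter_iff, mem_diff, mem_empty_iff_false, iff_false]
      tauto
    rw [hemp] at hint
    exact hpu.2.2.1 hint
lemma b_of_c {l : Ordinal} (p q : Q0 l)
    (hc : ∃ ε, ε < l ∧ ∀ α ∈ q.C, ε ≤ α →
      ∃ e : Set (Set Ordinal),
        IsUltraOn (Ico (sSup (p.C ∩ Iic α)) (sInf (p.C ∩ Ici (nxt q.C α))) ∩ p.C) e ∧
        q.d α = {B | ∃ A ∈ ufSum
            (Ico (sSup (p.C ∩ Iic α)) (sInf (p.C ∩ Ici (nxt q.C α))) ∩ p.C) e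
            (fun x => Ico x (nxt p.C x)) p.d,
          B = A ∩ Ico α (nxt q.C α)}) :
    ∃ ε, ε < l ∧ ∀ α ∈ q.C, ε ≤ α → ∀ A ∈ q.d α,
      ∃ β ∈ p.C, A ∩ Ico β (nxt p.C β) ∈ p.d β := by
  obtain ⟨ε, hε, hcp⟩ := hc
  refine ⟨ε, hε, ?_⟩
  intro α hαq hαε A' hA'
  obtain ⟨e, he, heq⟩ := hcp α hαq hαε
  set X := Ico (sSup (p.C ∩ Iic α)) (sInf (p.C ∩ Ici (nxt q.C α))) ∩ p.C with hX
  by_contra hno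
  push_neg at hno
  have hqu := q.ultra α hαq
  set U := ⋃ β ∈ X, Ico β (nxt p.C β) with hU
  have hXC : X ⊆ p.C := inter_subset_right
  have hBmem : (U \ A') ∈ ufSum X e (fun x => Ico x (nxt p.C x)) p.d := by
    refine ⟨diff_subset, ?_⟩
    have hXeq : {x | x ∈ X ∧ Ico x (nxt p.C x) ∩ (U \ A') ∈ p.d x} = X := by
      ext x
      constructor
      · exact fun h => h.1
      · intro hx
        refine ⟨hx, ?_⟩
        have hpu := p.ultra x (hXC hx)
        have hxU : Ico x (nxt p.C x) ⊆ U := subset_biUnion_of_mem (u := fun β => Ico β (nxt p.C β)) hx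
        have heqset : Ico x (nxt p.C x) ∩ (U \ A') =
            Ico x (nxt p.C x) \ (A' ∩ Ico x (nxt p.C x)) := by
          ext ξ
          constructor
          · rintro ⟨h1, -, h3⟩
            exact ⟨h1, fun hc' => h3 hc'.1⟩
          · rintro ⟨h1, h2⟩
            exact ⟨h1, hxU h1, fun hA => h2 ⟨hA, h1⟩⟩
        rcases hpu.2.2.2.2.2 (A' ∩ Ico x (nxt p.C x)) inter_subset_right with h | h
        · exact absurd h (hno x (hXC hx))
        · rw [heqset]; exact h
    rw [hXeq]
    exact he.2.1
  have hBZ : (U \ A') ∩ Ico α (nxt q.C α) ∈ q.d α := by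
    rw [heq]
    exact ⟨U \ A', hBmem, rfl⟩
  have hint := hqu.2.2.2.2.1 _ _ hA' hBZ
  have hemp : A' ∩ ((U \ A') ∩ Ico α (nxt q.C α)) = ∅ := by
    ext ξ
    simp only [mem_inter_iff, mem_diff, mem_empty_iff_false, iff_false]
    tauto
  rw [hemp] at hint
  exact hqu.2.2.1 hint
set_option linter.deprecated false in
lemma b_of_a {κ : Cardinal} (hreg : κ.IsRegular) (hunc : ℵ₀ < κ) (p q : Q0 κ.ord)
    (ha : le0 κ.ord p q) :
    ∃ ε, ε < κ.ord ∧ ∀ α ∈ q.C, ε ≤ α → ∀ A ∈ q.d α,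
      ∃ β ∈ p.C, A ∩ Ico β (nxt p.C β) ∈ p.d β := by
  classical
  have hl : Order.IsSuccLimit κ.ord := Cardinal.isSuccLimit_ord hreg.aleph0_le
  by_contra hnb
  push_neg at hnb
  set T := {α | α ∈ q.C ∧ ∃ A ∈ q.d α, ∀ β ∈ p.C, A ∩ Ico β (nxt p.C β) ∉ p.d β} with hTdef
  have hTne : ∀ ε, ε < κ.ord → (T ∩ Ici ε).Nonempty := by
    intro ε hε
    obtain ⟨α, hαq, hαε, A, hA, hbd⟩ := hnb ε hε
    exact ⟨α, ⟨hαq, A, hA, hbd⟩, hαε⟩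
  have hbadex : ∀ α : Ordinal, ∃ Aa : Set Ordinal, α ∈ T →
      Aa ∈ q.d α ∧ ∀ β ∈ p.C, Aa ∩ Ico β (nxt p.C β) ∉ p.d β := by
    intro α
    by_cases h : α ∈ T
    · obtain ⟨-, A, hA, hb⟩ := h
      exact ⟨A, fun _ => ⟨hA, hb⟩⟩
    · exact ⟨∅, fun h' => absurd h' h⟩
  choose bad hbad using hbadex
  set a : Ordinal → Ordinal := fun ε => sInf (T ∩ Ici ε) with hadef
  have haspec : ∀ ε, ε < κ.ord → a ε ∈ T ∧ ε ≤ a ε := fun ε hε => csInf_mem (hTne ε hε)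
  have hamin : ∀ ε, ∀ t ∈ T, ε ≤ t → a ε ≤ t := fun ε t ht hεt => csInf_le' ⟨ht, hεt⟩
  have hal : ∀ ε, ε < κ.ord → a ε < κ.ord := fun ε hε => q.club.1 (haspec ε hε).1.1
  set g : Ordinal → Ordinal := fun ε => sInf (p.C ∩ Ici (nxt q.C (a ε))) + 1 with hgdef
  have hgl : ∀ ε, ε < κ.ord → g ε < κ.ord := by
    intro ε hε
    have h1 := sInf_Ici_mem p.club (nxt_lt q.club (hal ε hε))
    have h2 : sInf (p.C ∩ Ici (nxt q.C (a ε))) < κ.ord := p.club.1 h1.1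
    show sInf (p.C ∩ Ici (nxt q.C (a ε))) + 1 < κ.ord
    rw [Ordinal.add_one_eq_succ]
    exact hl.succ_lt h2
  set E := {δ | δ < κ.ord ∧ ∀ ξ, ξ < δ → g ξ < δ} with hEdef
  have hE : ∀ ε, ε < κ.ord → ∃ δ ∈ E, ε ≤ δ := by
    intro ε hε
    set γseq : ℕ → Ordinal := fun n =>
      Nat.rec ε (fun _ ih => max (ih + 1) (Ordinal.blsub ih (fun ξ _ => g ξ))) n with hγdef
    have hγl : ∀ n, γseq n < κ.ord := by
      intro n
      induction n with
      | zero => exact hε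
      | succ n ih =>
        refine max_lt ?_ ?_
        · show γseq n + 1 < κ.ord
          rw [Ordinal.add_one_eq_succ]; exact hl.succ_lt ih
        · refine Ordinal.blsub_lt_ord ?_ ?_
          · rw [hreg.cof_eq]
            exact Cardinal.lt_ord.1 ih
          · intro i hi
            exact hgl i (hi.trans ih)
    have hγsucc : ∀ n, Ordinal.blsub (γseq n) (fun ξ _ => g ξ) ≤ γseq (n + 1) :=
      fun n => le_max_right _ _
    refine ⟨iSup γseq, ⟨?_, ?_⟩, ?_⟩
    · refine Cardinal.iSup_lt_ord_lift_of_isRegular hreg ?_ hγl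
      rw [Cardinal.mk_nat, Cardinal.lift_aleph0]
      exact hunc
    · intro ξ hξ
      obtain ⟨n, hn⟩ := Ordinal.lt_iSup_iff.1 hξ
      have h1 : g ξ < Ordinal.blsub (γseq n) (fun ξ _ => g ξ) := Ordinal.lt_blsub _ ξ hn
      exact lt_of_lt_of_le (h1.trans_le (hγsucc n)) (Ordinal.le_iSup γseq (n + 1))
    · exact Ordinal.le_iSup γseq 0
  have hsp : ∀ δ δ', δ ∈ E → δ' ∈ E → δ < δ' → ∀ β ∈ p.C,
      (bad (a δ) ∩ Ico β (nxt p.C β)).Nonempty →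
      (bad (a δ') ∩ Ico β (nxt p.C β)).Nonempty → bad (a δ) = bad (a δ') := by
    intro δ δ' hδ hδ' hlt β hβC hne hne'
    rcases le_or_gt δ' (a δ) with hge | hlt2
    · have h1 : a δ' ≤ a δ := hamin δ' _ (haspec δ hδ.1).1 hge
      have h2 : a δ ≤ a δ' :=
        hamin δ _ (haspec δ' hδ'.1).1 (le_trans (le_of_lt hlt) (haspec δ' hδ'.1).2)
      rw [le_antisymm h2 h1]
    · exfalso
      have hgδ : g δ < δ' := hδ'.2 δ hlt
      have hβs := sInf_Ici_mem p.club (nxt_lt q.club (hal δ hδ.1))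
      obtain ⟨ξ, hξbad, hξβ, hξn⟩ := hne
      have hbd := hbad (a δ) (haspec δ hδ.1).1
      have hsubZ : bad (a δ) ⊆ Ico (a δ) (nxt q.C (a δ)) :=
        (q.ultra _ (haspec δ hδ.1).1.1).1 _ hbd.1
      have hξq : ξ < nxt q.C (a δ) := (hsubZ hξbad).2
      have hββs : β < sInf (p.C ∩ Ici (nxt q.C (a δ))) :=
        lt_of_lt_of_le (lt_of_le_of_lt hξβ hξq) hβs.2
      have hnxtβ : nxt p.C β ≤ sInf (p.C ∩ Ici (nxt q.C (a δ))) := nxt_le p.club hβs.1 hββs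
      obtain ⟨ξ', hξ'bad, hξ'β, hξ'n⟩ := hne'
      have hbd' := hbad (a δ') (haspec δ' hδ'.1).1
      have hξ'ge : a δ' ≤ ξ' := ((q.ultra _ (haspec δ' hδ'.1).1.1).1 _ hbd'.1 hξ'bad).1
      have c1 : (δ' : Ordinal) ≤ a δ' := (haspec δ' hδ'.1).2
      have c2 : sInf (p.C ∩ Ici (nxt q.C (a δ))) < g δ := by
        show _ < sInf (p.C ∩ Ici (nxt q.C (a δ))) + 1
        rw [Ordinal.add_one_eq_succ]
        exact Order.lt_succ _
      have : ξ' < ξ' :=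
        lt_of_lt_of_le (lt_of_lt_of_le hξ'n (hnxtβ.trans (le_of_lt (c2.trans hgδ))))
          (c1.trans (hξ'ge))
      exact absurd this (lt_irrefl ξ')
  set B := Iio κ.ord \ ⋃ δ ∈ E, bad (a δ) with hBdef
  have hBp : B ∈ fil κ.ord p := by
    refine ⟨diff_subset, 0, hl.pos, ?_⟩
    intro β hβC _
    have hpu := p.ultra β hβC
    have hZl : Ico β (nxt p.C β) ⊆ Iio κ.ord :=
      fun ξ hξ => hξ.2.trans (nxt_lt p.club (p.club.1 hβC))
    have hBZ : B ∩ Ico β (nxt p.C β) = Ico β (nxt p.C β) \ ⋃ δ ∈ E, bad (a δ) := by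
      ext ξ
      constructor
      · rintro ⟨⟨-, hU⟩, hZ⟩
        exact ⟨hZ, hU⟩
      · rintro ⟨hZ, hU⟩
        exact ⟨⟨hZl hZ, hU⟩, hZ⟩
    rw [hBZ]
    by_cases hcase : ∃ δ ∈ E, (bad (a δ) ∩ Ico β (nxt p.C β)).Nonempty
    · obtain ⟨δ₀, hδ₀E, hne₀⟩ := hcase
      have hkey : Ico β (nxt p.C β) \ ⋃ δ ∈ E, bad (a δ) =
          Ico β (nxt p.C β) \ bad (a δ₀) := by
        ext ξ
        constructor
        · rintro ⟨hZ, hU⟩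
          exact ⟨hZ, fun hmem => hU (mem_biUnion hδ₀E hmem)⟩
        · rintro ⟨hZ, hb0⟩
          refine ⟨hZ, fun hU => ?_⟩
          simp only [mem_iUnion, exists_prop] at hU
          obtain ⟨δ, hδE, hξδ⟩ := hU
          have heqb : bad (a δ) = bad (a δ₀) := by
            rcases lt_trichotomy δ δ₀ with h | h | h
            · exact hsp δ δ₀ hδE hδ₀E h β hβC ⟨ξ, hξδ, hZ⟩ hne₀
            · rw [h]
            · exact (hsp δ₀ δ hδ₀E hδE h β hβC hne₀ ⟨ξ, hξδ, hZ⟩).symm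
          exact hb0 (heqb ▸ hξδ)
      rw [hkey]
      have hbd₀ := hbad (a δ₀) (haspec δ₀ hδ₀E.1).1
      rcases hpu.2.2.2.2.2 (bad (a δ₀) ∩ Ico β (nxt p.C β)) inter_subset_right with h | h
      · exact absurd h (hbd₀.2 β hβC)
      · have heq2 : Ico β (nxt p.C β) \ (bad (a δ₀) ∩ Ico β (nxt p.C β)) =
            Ico β (nxt p.C β) \ bad (a δ₀) := by
          ext ξ
          simp only [mem_diff, mem_inter_iff]
          tauto
        rwa [heq2] at h
    · push_neg at hcase
      have heq3 : Ico β (nxt p.C β) \ ⋃ δ ∈ E, bad (a δ) = Ico β (nxt p.C β) := by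
        ext ξ
        constructor
        · exact fun h => h.1
        · intro hZ
          refine ⟨hZ, fun hU => ?_⟩
          simp only [mem_iUnion, exists_prop] at hU
          obtain ⟨δ, hδE, hξδ⟩ := hU
          have h5 : ξ ∈ bad (a δ) ∩ Ico β (nxt p.C β) := ⟨hξδ, hZ⟩
          rw [hcase δ hδE] at h5
          exact h5
      rw [heq3]
      exact hpu.2.1
  have hBq : B ∉ fil κ.ord q := by
    rintro ⟨-, ε, hε, hprop⟩
    obtain ⟨δ, hδE, hδε⟩ := hE ε hε
    have hαT := (haspec δ hδE.1).1
    have hαq : a δ ∈ q.C := hαT.1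
    have hεα : ε ≤ a δ := le_trans hδε (haspec δ hδE.1).2
    have hmem := hprop (a δ) hαq hεα
    have hqu := q.ultra (a δ) hαq
    have hbd := hbad (a δ) hαT
    have hint := hqu.2.2.2.2.1 _ _ hmem hbd.1
    have hemp : B ∩ Ico (a δ) (nxt q.C (a δ)) ∩ bad (a δ) = ∅ := by
      ext ξ
      simp only [mem_inter_iff, mem_empty_iff_false, iff_false, not_and]
      intro hB hbadm
      exact hB.1.2 (mem_biUnion hδE hbadm)
    rw [hemp] at hint
    exact hqu.2.2.1 hint
  exact hBq (ha hBp)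

/-- Proposition "tfcae": for `p, q ∈ Q⁰_λ` the conditions (a) `p ≤⁰ q`;
(b) eventual witnessing of `d^q_α` inside `p`; and (c) eventual representation of
`d^q_α` as a sum of the `d^p_β` along an ultrafilter, are equivalent. -/
theorem stmt10 (κ : Cardinal) (hreg : κ.IsRegular) (hunc : ℵ₀ < κ)
    (p q : Q0 κ.ord) :
    (le0 κ.ord p q ↔
      (∃ ε, ε < κ.ord ∧ ∀ α ∈ q.C, ε ≤ α → ∀ A ∈ q.d α,
        ∃ β ∈ p.C, A ∩ Ico β (nxt p.C β) ∈ p.d β)) ∧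
    ((∃ ε, ε < κ.ord ∧ ∀ α ∈ q.C, ε ≤ α → ∀ A ∈ q.d α,
        ∃ β ∈ p.C, A ∩ Ico β (nxt p.C β) ∈ p.d β) ↔
      (∃ ε, ε < κ.ord ∧ ∀ α ∈ q.C, ε ≤ α →
        ∃ e : Set (Set Ordinal),
          IsUltraOn (Ico (sSup (p.C ∩ Iic α)) (sInf (p.C ∩ Ici (nxt q.C α))) ∩ p.C) e ∧
          q.d α = {B | ∃ A ∈ ufSum
              (Ico (sSup (p.C ∩ Iic α)) (sInf (p.C ∩ Ici (nxt q.C α))) ∩ p.C) e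
              (fun x => Ico x (nxt p.C x)) p.d,
            B = A ∩ Ico α (nxt q.C α)})) := by
  have hl : Order.IsSuccLimit κ.ord := Cardinal.isSuccLimit_ord hreg.aleph0_le
  exact ⟨⟨fun ha => b_of_a hreg hunc p q ha, fun hb => a_of_b p q hb⟩,
    ⟨fun hb => c_of_b hl p q hb, fun hc => b_of_c p q hc⟩⟩

end Sh830

end
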